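/- Let α be a real number with 0 < α < π. Then the function η ↦ F(η,α) is strictly increasing on the interval (0,1]: for all real η₁, η₂ with 0 < η₁ < η₂ ≤ 1, one has F(η₁,α) < F(η₂,α). -/

import Mathlib

open Real

section DispersionAux

private lemma trig1' (A P : ℝ) : sin A * sin (2*P - A) = sin P ^ 2 - sin (P - A) ^ 2 := by
  have hA := Real.sin_sub P (P - A)
  rw [sub_sub_cancel] at hA
  have hB : sin (2*P - A) = sin P * cos (P - A) + cos P * sin (P - A) := by
    rw [show 2*P - A = P + (P - A) by ring, Real.sin_add]
  rw [hA, hB]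
  nlinarith [sin_sq_add_cos_sq P, sin_sq_add_cos_sq (P - A)]

private lemma trig2' (A P : ℝ) : cos A * cos (2*P - A) - 1 = -(sin (P - A) ^ 2 + sin P ^ 2) := by
  have hA := Real.cos_sub P (P - A)
  rw [sub_sub_cancel] at hA
  have hB : cos (2*P - A) = cos P * cos (P - A) - sin P * sin (P - A) := by
    rw [show 2*P - A = P + (P - A) by ring, Real.cos_add]
  rw [hA, hB]
  nlinarith [sin_sq_add_cos_sq P, sin_sq_add_cos_sq (P - A)]

private lemma cot_aux' {x : ℝ} (hx : 0 < x) : sin x * cos x < x := by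
  have h1 := Real.sin_lt (show 0 < 2*x by linarith)
  have h2 := Real.sin_two_mul x
  linarith

private lemma ctg_anti' : StrictAntiOn (fun x => x * Real.cos x / Real.sin x) (Set.Ioo 0 Real.pi) := by
  apply strictAntiOn_of_deriv_neg (convex_Ioo 0 Real.pi)
  · apply ContinuousOn.div (by fun_prop) (by fun_prop)
    intro x hx
    exact (Real.sin_pos_of_pos_of_lt_pi hx.1 hx.2).ne'
  · intro x hx
    rw [interior_Ioo] at hx
    have hs := Real.sin_pos_of_pos_of_lt_pi hx.1 hx.2
    have hd : HasDerivAt (fun x => x * Real.cos x / Real.sin x)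
        (((1 * Real.cos x + x * (-Real.sin x)) * Real.sin x - x * Real.cos x * Real.cos x) /
          (Real.sin x) ^ 2) x :=
      ((hasDerivAt_id x).mul (Real.hasDerivAt_cos x)).div (Real.hasDerivAt_sin x) hs.ne'
    rw [hd.deriv]
    apply div_neg_of_neg_of_pos
    · have he : (1 * Real.cos x + x * (-Real.sin x)) * Real.sin x - x * Real.cos x * Real.cos x
          = Real.sin x * Real.cos x - x := by
        linear_combination (-x) * sin_sq_add_cos_sq x
      rw [he]
      linarith [cot_aux' hx.1]
    · exact pow_pos hs 2

private lemma prod_key' {u v : ℝ} (hu : 0 < u) (huv : u < v) (hv : v < Real.pi) :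
    v * Real.cos v * Real.sin u < u * Real.cos u * Real.sin v := by
  have h := ctg_anti' (Set.mem_Ioo.2 ⟨hu, huv.trans hv⟩) (Set.mem_Ioo.2 ⟨hu.trans huv, hv⟩) huv
  have hsu := Real.sin_pos_of_pos_of_lt_pi hu (huv.trans hv)
  have hsv := Real.sin_pos_of_pos_of_lt_pi (hu.trans huv) hv
  rw [div_lt_div_iff₀ hsv hsu] at h
  exact h

private lemma ratio_mono' {β : ℝ} (hβ0 : 0 < β) (hβπ : β < Real.pi) :
    StrictMonoOn (fun η => Real.sin (β*η) / Real.sin (Real.pi*η)) (Set.Ioo 0 1) := by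
  apply strictMonoOn_of_deriv_pos (convex_Ioo 0 1)
  · apply ContinuousOn.div (by fun_prop) (by fun_prop)
    intro x hx
    exact (Real.sin_pos_of_pos_of_lt_pi (by nlinarith [Real.pi_pos, hx.1])
      (by nlinarith [Real.pi_pos, hx.2])).ne'
  · intro x hx
    rw [interior_Ioo] at hx
    have hπx0 : 0 < Real.pi * x := by nlinarith [Real.pi_pos, hx.1]
    have hπxπ : Real.pi * x < Real.pi := by nlinarith [Real.pi_pos, hx.2]
    have hs := Real.sin_pos_of_pos_of_lt_pi hπx0 hπxπ
    have h1 : HasDerivAt (fun η => Real.sin (β*η)) (Real.cos (β*x) * β) x := by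
      have := (Real.hasDerivAt_sin (β*x)).comp x ((hasDerivAt_id x).const_mul β)
      simpa [Function.comp_def] using this
    have h2 : HasDerivAt (fun η => Real.sin (Real.pi*η)) (Real.cos (Real.pi*x) * Real.pi) x := by
      have := (Real.hasDerivAt_sin (Real.pi*x)).comp x ((hasDerivAt_id x).const_mul Real.pi)
      simpa [Function.comp_def] using this
    have hd : HasDerivAt (fun η => Real.sin (β*η) / Real.sin (Real.pi*η))
        ((Real.cos (β*x) * β * Real.sin (Real.pi*x) - Real.sin (β*x) * (Real.cos (Real.pi*x) * Real.pi))
          / (Real.sin (Real.pi*x)) ^ 2) x := h1.div h2 hs.ne'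
    rw [hd.deriv]
    apply div_pos
    · have hk := prod_key' (u := β*x) (v := Real.pi*x) (mul_pos hβ0 hx.1)
        (by nlinarith [hx.1]) hπxπ
      nlinarith [hx.1, hk]
    · exact pow_pos hs 2

end DispersionAux

/-- The dispersion function of the transmission problem at a corner of opening `α`. -/
noncomputable def F (η α : ℝ) : ℝ :=
  Real.sin (α * η) * Real.sin ((2 * Real.pi - α) * η) /
    (Real.cos (α * η) * Real.cos ((2 * Real.pi - α) * η) - 1)

theorem dispersion_strictMono
    (α : ℝ) (hα0 : 0 < α) (hαπ : α < Real.pi)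
    (η₁ η₂ : ℝ) (h0 : 0 < η₁) (h12 : η₁ < η₂) (h21 : η₂ ≤ 1) :
    F η₁ α < F η₂ α := by
  have hβ0 : 0 < Real.pi - α := by linarith
  have hβπ : Real.pi - α < Real.pi := by linarith
  -- Rewrite F in terms of squared sines
  have hF : ∀ η : ℝ, F η α
      = (sin ((Real.pi - α)*η) ^ 2 - sin (Real.pi*η) ^ 2)
        / (sin ((Real.pi - α)*η) ^ 2 + sin (Real.pi*η) ^ 2) := by
    intro η
    unfold F
    rw [show (2 * Real.pi - α) * η = 2*(Real.pi*η) - α*η by ring,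
      trig1' (α*η) (Real.pi*η), trig2' (α*η) (Real.pi*η),
      show Real.pi*η - α*η = (Real.pi - α)*η by ring, div_neg, ← neg_div, neg_sub]
  rw [hF η₁, hF η₂]
  set β := Real.pi - α with hβ
  have hη₁1 : η₁ < 1 := lt_of_lt_of_le h12 h21
  have h02 : 0 < η₂ := h0.trans h12
  have hs1 : 0 < sin (β*η₁) := Real.sin_pos_of_pos_of_lt_pi (mul_pos hβ0 h0)
    (by nlinarith [hβπ, hβ0])
  have hs2 : 0 < sin (β*η₂) := Real.sin_pos_of_pos_of_lt_pi (mul_pos hβ0 h02)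
    (by nlinarith [hβπ, hβ0])
  have ht1 : 0 < sin (Real.pi*η₁) := Real.sin_pos_of_pos_of_lt_pi
    (mul_pos Real.pi_pos h0) (by nlinarith [Real.pi_pos])
  have ht2 : 0 ≤ sin (Real.pi*η₂) := Real.sin_nonneg_of_nonneg_of_le_pi
    (by positivity) (by nlinarith [Real.pi_pos])
  -- Key cross inequality
  have K : sin (Real.pi*η₂) * sin (β*η₁) < sin (Real.pi*η₁) * sin (β*η₂) := by
    rcases eq_or_lt_of_le h21 with h | h
    · have hz : sin (Real.pi*η₂) = 0 := by rw [h, mul_one, Real.sin_pi]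
      rw [hz, zero_mul]
      exact mul_pos ht1 hs2
    · have hm := ratio_mono' hβ0 hβπ (Set.mem_Ioo.2 ⟨h0, hη₁1⟩)
        (Set.mem_Ioo.2 ⟨h02, h⟩) h12
      have ht2' : 0 < sin (Real.pi*η₂) := Real.sin_pos_of_pos_of_lt_pi
        (mul_pos Real.pi_pos h02) (by nlinarith [Real.pi_pos])
      rw [div_lt_div_iff₀ ht1 ht2'] at hm
      linarith [hm]
  have Ksq : sin (Real.pi*η₂) ^ 2 * sin (β*η₁) ^ 2
      < sin (Real.pi*η₁) ^ 2 * sin (β*η₂) ^ 2 := by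
    nlinarith [K, mul_nonneg ht2 hs1.le, mul_pos ht1 hs2]
  have hd1 : 0 < sin (β*η₁) ^ 2 + sin (Real.pi*η₁) ^ 2 := by positivity
  have hd2 : 0 < sin (β*η₂) ^ 2 + sin (Real.pi*η₂) ^ 2 := by
    have := pow_pos hs2 2
    positivity
  rw [div_lt_div_iff₀ hd1 hd2]
  nlinarith [Ksq]
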